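/- Every autoregressive max-definable function is a ReLU decoder: let f : ℝ^{n×p} → ℝ^{m×p} be max-definable and autoregressive. Then there exist a finite t ∈ ℕ, multihead ReLU masked attention modules β_1,…,β_t, and one-layer ReLU feed-forward neural networks φ_1,…,φ_t (applied columnwise) such that f = φ_t ∘ β_t ∘ φ_{t−1} ∘ β_{t−1} ∘ ⋯ ∘ φ_1 ∘ β_1. -/

import Mathlib

noncomputable section

open Matrix

/-- The rectified linear unit. -/
def relu (x : ℝ) : ℝ := max x 0

/-- Entrywise ReLU of a matrix. -/
def matRelu {a b : ℕ} (M : Matrix (Fin a) (Fin b) ℝ) : Matrix (Fin a) (Fin b) ℝ :=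
  Matrix.of fun i j => relu (M i j)

/-- The ReLU-activated masked attention module: the score matrix
`(A_K X + B_K)ᵀ (A_Q X + B_Q)` is ReLU'd on its upper-triangular part (`i ≤ j`) and the
strictly lower-triangular entries (`i > j`) are set to `0`, before multiplying by the values. -/
def maskedAttention {n p d m : ℕ}
    (AQ AK : Matrix (Fin d) (Fin n) ℝ) (AV : Matrix (Fin m) (Fin n) ℝ)
    (BQ BK : Matrix (Fin d) (Fin p) ℝ) (BV : Matrix (Fin m) (Fin p) ℝ)
    (X : Matrix (Fin n) (Fin p) ℝ) : Matrix (Fin m) (Fin p) ℝ :=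
  (AV * X + BV) *
    Matrix.of (fun i j : Fin p =>
      if i ≤ j then relu (((AK * X + BK)ᵀ * (AQ * X + BQ)) i j) else 0)

/-- An `h`-headed ReLU masked attention module: `h` masked attention modules stacked
vertically, giving a map `ℝ^{n×p} → ℝ^{hm×p}`. -/
def multiheadMaskedAttention {n p d m h : ℕ}
    (AQ AK : Fin h → Matrix (Fin d) (Fin n) ℝ) (AV : Fin h → Matrix (Fin m) (Fin n) ℝ)
    (BQ BK : Fin h → Matrix (Fin d) (Fin p) ℝ) (BV : Fin h → Matrix (Fin m) (Fin p) ℝ)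
    (X : Matrix (Fin n) (Fin p) ℝ) : Matrix (Fin (h * m)) (Fin p) ℝ :=
  Matrix.of fun i j =>
    maskedAttention (AQ (finProdFinEquiv.symm i).1) (AK (finProdFinEquiv.symm i).1)
      (AV (finProdFinEquiv.symm i).1) (BQ (finProdFinEquiv.symm i).1)
      (BK (finProdFinEquiv.symm i).1) (BV (finProdFinEquiv.symm i).1) X
      (finProdFinEquiv.symm i).2 j

/-- A one-layer ReLU feed-forward neural network `φ(x) = A₂ ReLU(A₁ x + b₁) + b₂`. -/
def oneLayerNN {a b c : ℕ} (A1 : Matrix (Fin b) (Fin a) ℝ) (b1 : Fin b → ℝ)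
    (A2 : Matrix (Fin c) (Fin b) ℝ) (b2 : Fin c → ℝ) (x : Fin a → ℝ) : Fin c → ℝ :=
  A2.mulVec (fun i => relu (A1.mulVec x i + b1 i)) + b2

/-- Apply a map `φ : ℝ^a → ℝ^c` columnwise to a matrix `X ∈ ℝ^{a×p}`. -/
def colwise {a c p : ℕ} (φ : (Fin a → ℝ) → (Fin c → ℝ))
    (X : Matrix (Fin a) (Fin p) ℝ) : Matrix (Fin c) (Fin p) ℝ :=
  Matrix.of fun i j => φ (fun r => X r j) i

/-- A function `g : ℝ^ι → ℝ` is max-definable if it is a finite max of finite mins of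
polynomials. -/
def IsMaxDefinable (ι : Type) [Fintype ι] (g : (ι → ℝ) → ℝ) : Prop :=
  ∃ (m q : ℕ) (ξ : Fin (m + 1) → Fin (q + 1) → MvPolynomial ι ℝ),
    ∀ x, g x = ⨆ i, ⨅ j, MvPolynomial.eval x (ξ i j)

/-- A matrix-valued function is max-definable if each coordinate function, as a function of the
entries of the input matrix, is max-definable. -/
def IsMatrixMaxDefinable {n p m q : ℕ}
    (f : Matrix (Fin n) (Fin p) ℝ → Matrix (Fin m) (Fin q) ℝ) : Prop :=
  ∀ (i : Fin m) (j : Fin q),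
    IsMaxDefinable (Fin n × Fin p) (fun x => f (Matrix.of fun a b => x (a, b)) i j)

/-- A function `f : ℝ^{n×p} → ℝ^{m×p}` is autoregressive if for each `j`, the `j`-th column of
`f(X)` depends only on the first `j` columns of `X`. -/
def Autoregressive {n m p : ℕ}
    (f : Matrix (Fin n) (Fin p) ℝ → Matrix (Fin m) (Fin p) ℝ) : Prop :=
  ∀ (X Y : Matrix (Fin n) (Fin p) ℝ) (j : Fin p),
    (∀ j' : Fin p, j' ≤ j → ∀ i, X i j' = Y i j') → ∀ i, f X i j = f Y i j

/-- A decoder block with one-layer feed-forward network: a multihead ReLU masked attention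
module followed by a one-layer ReLU neural network applied columnwise. -/
def IsDecoderBlock1 {n r p : ℕ}
    (f : Matrix (Fin n) (Fin p) ℝ → Matrix (Fin r) (Fin p) ℝ) : Prop :=
  ∃ (d m h w : ℕ)
    (AQ AK : Fin h → Matrix (Fin d) (Fin n) ℝ) (AV : Fin h → Matrix (Fin m) (Fin n) ℝ)
    (BQ BK : Fin h → Matrix (Fin d) (Fin p) ℝ) (BV : Fin h → Matrix (Fin m) (Fin p) ℝ)
    (A1 : Matrix (Fin w) (Fin (h * m)) ℝ) (c1 : Fin w → ℝ)
    (A2 : Matrix (Fin r) (Fin w) ℝ) (c2 : Fin r → ℝ),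
    f = fun X =>
      colwise (oneLayerNN A1 c1 A2 c2) (multiheadMaskedAttention AQ AK AV BQ BK BV X)

/-- A `t`-layer decoder built of one-layer networks: the composition of `t` decoder blocks
`φ_t ∘ β_t ∘ ⋯ ∘ φ_1 ∘ β_1`. -/
inductive IsDecoder1 {p : ℕ} : ∀ {n r : ℕ}, ℕ →
    (Matrix (Fin n) (Fin p) ℝ → Matrix (Fin r) (Fin p) ℝ) → Prop
  | block {n r : ℕ} (f : Matrix (Fin n) (Fin p) ℝ → Matrix (Fin r) (Fin p) ℝ)
      (hf : IsDecoderBlock1 f) : IsDecoder1 1 f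
  | comp {n s r : ℕ} (t : ℕ) (f : Matrix (Fin n) (Fin p) ℝ → Matrix (Fin s) (Fin p) ℝ)
      (g : Matrix (Fin s) (Fin p) ℝ → Matrix (Fin r) (Fin p) ℝ)
      (hf : IsDecoderBlock1 f) (hg : IsDecoder1 t g) : IsDecoder1 (t + 1) (g ∘ f)

/-! ### Auxiliary machinery -/

namespace DecoderAux

@[simp] lemma relu_zero : relu 0 = 0 := by simp [relu]

@[simp] lemma relu_one : relu (1 : ℝ) = 1 := by norm_num [relu]

lemma relu_sub_relu_neg (x : ℝ) : relu x - relu (-x) = x := by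
  rcases le_total x 0 with h | h
  · rw [relu, relu, max_eq_right h, max_eq_left (neg_nonneg.2 h)]; ring
  · rw [relu, relu, max_eq_left h, max_eq_right (neg_nonpos.2 h)]; ring

variable {n p : ℕ}

abbrev Mat (a b : ℕ) := Matrix (Fin a) (Fin b) ℝ

/-- entrywise formula for masked attention -/
lemma maskedAttention_apply {s d m : ℕ}
    (AQ AK : Matrix (Fin d) (Fin s) ℝ) (AV : Matrix (Fin m) (Fin s) ℝ)
    (BQ BK : Matrix (Fin d) (Fin p) ℝ) (BV : Matrix (Fin m) (Fin p) ℝ)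
    (Z : Mat s p) (k : Fin m) (j : Fin p) :
    maskedAttention AQ AK AV BQ BK BV Z k j =
      ∑ i' : Fin p, (AV * Z + BV) k i' *
        (if i' ≤ j then relu (((AK * Z + BK)ᵀ * (AQ * Z + BQ)) i' j) else 0) := by
  simp [maskedAttention, Matrix.mul_apply]

/-- matrix duplicating a vector as `(x, -x)` -/
def dup (a : ℕ) : Matrix (Fin (a + a)) (Fin a) ℝ :=
  Matrix.of fun r c =>
    match finSumFinEquiv.symm r with
    | .inl k => if c = k then 1 else 0
    | .inr k => if c = k then -1 else 0

/-- matrix recombining `(u, v)` as `L (u - v)` -/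
def sel {r a : ℕ} (L : Matrix (Fin r) (Fin a) ℝ) : Matrix (Fin r) (Fin (a + a)) ℝ :=
  Matrix.of fun i q =>
    match finSumFinEquiv.symm q with
    | .inl k => L i k
    | .inr k => -L i k

lemma dup_mulVec {a : ℕ} (x : Fin a → ℝ) (r : Fin (a + a)) :
    (dup a).mulVec x r = Sum.elim x (fun k => -x k) (finSumFinEquiv.symm r) := by
  rcases hr : finSumFinEquiv.symm r with k | k <;>
    simp [dup, Matrix.mulVec, dotProduct, hr, ite_mul, Finset.sum_ite_eq']

/-- a one-layer NN computing an exactly linear map -/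
lemma oneLayerNN_linear {r a : ℕ} (L : Matrix (Fin r) (Fin a) ℝ) (x : Fin a → ℝ) :
    oneLayerNN (dup a) 0 (sel L) 0 x = L.mulVec x := by
  funext i
  simp only [oneLayerNN, Pi.add_apply, Pi.zero_apply, add_zero]
  have : ∀ q : Fin (a + a), sel L i q * relu ((dup a).mulVec x q) =
      Sum.elim (fun k => L i k * relu (x k)) (fun k => -L i k * relu (-x k))
        (finSumFinEquiv.symm q) := by
    intro q
    rw [dup_mulVec]
    rcases hq : finSumFinEquiv.symm q with k | k <;> simp [sel, hq]
  rw [Matrix.mulVec, dotProduct]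
  calc (∑ q : Fin (a + a), sel L i q * relu ((dup a).mulVec x q))
      = ∑ q : Fin (a + a), Sum.elim (fun k => L i k * relu (x k))
          (fun k => -L i k * relu (-x k)) (finSumFinEquiv.symm q) := by
        exact Finset.sum_congr rfl fun q _ => this q
    _ = ∑ u : Fin a ⊕ Fin a, Sum.elim (fun k => L i k * relu (x k))
          (fun k => -L i k * relu (-x k)) u := Equiv.sum_comp finSumFinEquiv.symm _
    _ = ∑ k : Fin a, L i k * relu (x k) + ∑ k : Fin a, -L i k * relu (-x k) := by
        rw [Fintype.sum_sum_type]; rfl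
    _ = ∑ k : Fin a, L i k * x k := by
        rw [← Finset.sum_add_distrib]
        refine Finset.sum_congr rfl fun k _ => ?_
        calc L i k * relu (x k) + -L i k * relu (-x k)
            = L i k * (relu (x k) - relu (-x k)) := by ring
          _ = L i k * x k := by rw [relu_sub_relu_neg]

/-- pack a `Fin r → Fin h → Fin m → ℝ` as a matrix on `Fin (h*m)` columns. -/
def pk {r h m : ℕ} (L : Fin r → Fin h → Fin m → ℝ) : Matrix (Fin r) (Fin (h * m)) ℝ :=
  Matrix.of fun i c => L i (finProdFinEquiv.symm c).1 (finProdFinEquiv.symm c).2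

/-- a decoder block consisting of a multihead attention followed by a linear map. -/
def linAttn {s r d m h : ℕ} (L : Fin r → Fin h → Fin m → ℝ)
    (AQ AK : Fin h → Matrix (Fin d) (Fin s) ℝ) (AV : Fin h → Matrix (Fin m) (Fin s) ℝ)
    (BQ BK : Fin h → Matrix (Fin d) (Fin p) ℝ) (BV : Fin h → Matrix (Fin m) (Fin p) ℝ) :
    Mat s p → Mat r p :=
  fun Z => pk L * multiheadMaskedAttention AQ AK AV BQ BK BV Z

lemma isBlock_linAttn {s r d m h : ℕ} (L : Fin r → Fin h → Fin m → ℝ)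
    (AQ AK : Fin h → Matrix (Fin d) (Fin s) ℝ) (AV : Fin h → Matrix (Fin m) (Fin s) ℝ)
    (BQ BK : Fin h → Matrix (Fin d) (Fin p) ℝ) (BV : Fin h → Matrix (Fin m) (Fin p) ℝ) :
    IsDecoderBlock1 (linAttn (p := p) L AQ AK AV BQ BK BV) := by
  refine ⟨d, m, h, h * m + h * m, AQ, AK, AV, BQ, BK, BV, dup (h * m), 0, sel (pk L), 0, ?_⟩
  funext Z
  ext i j
  have := congrFun (oneLayerNN_linear (pk L)
    (fun c => multiheadMaskedAttention AQ AK AV BQ BK BV Z c j)) i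
  simp only [colwise, Matrix.of_apply]
  rw [this]
  simp [linAttn, Matrix.mul_apply, Matrix.mulVec, dotProduct]

lemma linAttn_apply {s r d m h : ℕ} (L : Fin r → Fin h → Fin m → ℝ)
    (AQ AK : Fin h → Matrix (Fin d) (Fin s) ℝ) (AV : Fin h → Matrix (Fin m) (Fin s) ℝ)
    (BQ BK : Fin h → Matrix (Fin d) (Fin p) ℝ) (BV : Fin h → Matrix (Fin m) (Fin p) ℝ)
    (Z : Mat s p) (i : Fin r) (j : Fin p) :
    linAttn L AQ AK AV BQ BK BV Z i j =
      ∑ t : Fin h, ∑ k : Fin m, L i t k *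
        maskedAttention (AQ t) (AK t) (AV t) (BQ t) (BK t) (BV t) Z k j := by
  simp only [linAttn, Matrix.mul_apply, pk, Matrix.of_apply, multiheadMaskedAttention]
  calc (∑ c : Fin (h * m), L i (finProdFinEquiv.symm c).1 (finProdFinEquiv.symm c).2 *
        maskedAttention (AQ (finProdFinEquiv.symm c).1) (AK (finProdFinEquiv.symm c).1)
          (AV (finProdFinEquiv.symm c).1) (BQ (finProdFinEquiv.symm c).1)
          (BK (finProdFinEquiv.symm c).1) (BV (finProdFinEquiv.symm c).1) Z
          (finProdFinEquiv.symm c).2 j)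
      = ∑ q : Fin h × Fin m, L i q.1 q.2 *
          maskedAttention (AQ q.1) (AK q.1) (AV q.1) (BQ q.1) (BK q.1) (BV q.1) Z q.2 j :=
        Equiv.sum_comp finProdFinEquiv.symm (fun q : Fin h × Fin m => L i q.1 q.2 *
          maskedAttention (AQ q.1) (AK q.1) (AV q.1) (BQ q.1) (BK q.1) (BV q.1) Z q.2 j)
    _ = _ := Fintype.sum_prod_type _

end DecoderAux
namespace DecoderAux

variable {n p : ℕ}

lemma snoc_decoder : ∀ {a r t : ℕ} {g : Mat a p → Mat r p}, IsDecoder1 t g →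
    ∀ {r' : ℕ} (b : Mat r p → Mat r' p), IsDecoderBlock1 b → IsDecoder1 (t + 1) (b ∘ g) := by
  intro a r t g hg
  induction hg with
  | block f hf => exact fun b hb => .comp 1 f b hf (.block b hb)
  | comp t f g hf hg ih =>
      intro r' b hb
      have : b ∘ (g ∘ f) = (b ∘ g) ∘ f := rfl
      rw [this]
      exact .comp (t + 1) f (b ∘ g) hf (ih b hb)

/-- A "row": the value of one coordinate of a state, per column, per original input. -/
abbrev Row (n p : ℕ) := Fin p → Mat n p → ℝ

def Realizes {s : ℕ} (G : Mat n p → Mat s p) (w : Fin s → Row n p) : Prop :=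
  ∀ X k j, G X k j = w k j X

def GoodSt {s : ℕ} (w : Fin s → Row n p) : Prop :=
  ∃ G : Mat n p → Mat s p, (∃ t, IsDecoder1 t G) ∧ Realizes G w

lemma GoodSt.step {s r : ℕ} {w : Fin s → Row n p} (hw : GoodSt w)
    (b : Mat s p → Mat r p) (hb : IsDecoderBlock1 b) {w' : Fin r → Row n p}
    (hsem : ∀ (Z : Mat s p) (X : Mat n p),
      (∀ k j, Z k j = w k j X) → ∀ i j, b Z i j = w' i j X) : GoodSt w' := by
  obtain ⟨G, ⟨t, ht⟩, hG⟩ := hw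
  exact ⟨b ∘ G, ⟨t + 1, snoc_decoder ht b hb⟩,
    fun X i j => hsem (G X) X (fun k j' => hG X k j') i j⟩

lemma GoodSt.congr {s : ℕ} {w w' : Fin s → Row n p} (hw : GoodSt w)
    (h : ∀ i j X, w i j X = w' i j X) : GoodSt w' := by
  obtain ⟨G, ht, hG⟩ := hw
  exact ⟨G, ht, fun X k j => (hG X k j).trans (h k j X)⟩

/-- masked attention with the identity mask (`AQ = 0`, `AK = 0`, `BQ = BK = 1`): acts
columnwise as `AV ⬝ z + BV` column. -/
lemma maskedAttention_maskId {s m : ℕ} (AV : Matrix (Fin m) (Fin s) ℝ)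
    (BV : Matrix (Fin m) (Fin p) ℝ) (Z : Mat s p) (k : Fin m) (j : Fin p) :
    maskedAttention (0 : Matrix (Fin p) (Fin s) ℝ) 0 AV (1 : Matrix (Fin p) (Fin p) ℝ) 1 BV
      Z k j = (AV * Z + BV) k j := by
  rw [maskedAttention_apply]
  have h1 : ((0 : Matrix (Fin p) (Fin s) ℝ) * Z + (1 : Matrix (Fin p) (Fin p) ℝ)) = 1 := by
    simp
  rw [h1, Matrix.transpose_one, Matrix.one_mul]
  have hmask : ∀ i' : Fin p,
      (if i' ≤ j then relu ((1 : Matrix (Fin p) (Fin p) ℝ) i' j) else 0) =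
      if i' = j then 1 else 0 := by
    intro i'
    rcases eq_or_ne i' j with h | h
    · subst h; simp [Matrix.one_apply]
    · simp [Matrix.one_apply, h]
  simp only [hmask]
  simp [mul_ite, Finset.sum_ite_eq']

/-- general score shape with `AQ = 0`, `BQ = 1`. -/
lemma score_shape {s : ℕ} (AK : Matrix (Fin p) (Fin s) ℝ) (BK : Matrix (Fin p) (Fin p) ℝ)
    (Z : Mat s p) (i' j : Fin p) :
    (((AK * Z + BK)ᵀ * ((0 : Matrix (Fin p) (Fin s) ℝ) * Z +
      (1 : Matrix (Fin p) (Fin p) ℝ))) i' j) = (AK * Z + BK) j i' := by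
  have h1 : ((0 : Matrix (Fin p) (Fin s) ℝ) * Z + (1 : Matrix (Fin p) (Fin p) ℝ)) = 1 := by
    simp
  rw [h1, Matrix.mul_one, Matrix.transpose_apply]

/-- the embedding matrix `Fin s → Fin (s+1)`. -/
def emb (s : ℕ) : Matrix (Fin (s + 1)) (Fin s) ℝ :=
  Matrix.of fun r c => if r = c.castSucc then 1 else 0

lemma emb_mul_castSucc {s q : ℕ} (Z : Matrix (Fin s) (Fin q) ℝ) (c : Fin s) (j : Fin q) :
    (emb s * Z) c.castSucc j = Z c j := by
  simp [emb, Matrix.mul_apply, ite_mul, Fin.castSucc_inj, Finset.sum_ite_eq']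

lemma emb_mul_last {s q : ℕ} (Z : Matrix (Fin s) (Fin q) ℝ) (j : Fin q) :
    (emb s * Z) (Fin.last s) j = 0 := by
  have : ∀ c : Fin s, Fin.last s ≠ c.castSucc := fun c => (Fin.castSucc_lt_last c).ne'
  simp [emb, Matrix.mul_apply, this]

/-- append any linear combination of existing rows. -/
lemma step_lin {s r : ℕ} {w : Fin s → Row n p} (hw : GoodSt w) (L : Fin r → Fin s → ℝ)
    (v : Fin r → Row n p) (hv : ∀ i j X, v i j X = ∑ k, L i k * w k j X) : GoodSt v := by
  refine hw.step (linAttn (fun i (_ : Fin 1) k => L i k)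
    (fun _ => (0 : Matrix (Fin p) (Fin s) ℝ)) (fun _ => (0 : Matrix (Fin p) (Fin s) ℝ))
    (fun _ => (1 : Matrix (Fin s) (Fin s) ℝ)) (fun _ => (1 : Matrix (Fin p) (Fin p) ℝ))
    (fun _ => (1 : Matrix (Fin p) (Fin p) ℝ)) (fun _ => (0 : Matrix (Fin s) (Fin p) ℝ)))
    (isBlock_linAttn _ _ _ _ _ _ _) ?_
  intro Z X hZ i j
  rw [linAttn_apply]
  rw [hv i j X]
  simp only [Fin.sum_univ_one]
  refine Finset.sum_congr rfl fun k _ => ?_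
  rw [maskedAttention_maskId]
  simp [hZ k j]

lemma GoodSt.proj {s' s : ℕ} {W : Fin s' → Row n p} (hW : GoodSt W)
    (v : Fin s → Row n p) (σ : Fin s → Fin s') (hσ : ∀ i j X, v i j X = W (σ i) j X) :
    GoodSt v := by
  refine step_lin hW (fun i k => if k = σ i then 1 else 0) v ?_
  intro i j X
  rw [hσ]
  simp [ite_mul, Finset.sum_ite_eq']

end DecoderAux
namespace DecoderAux

variable {n p : ℕ}

lemma sum_finOneMul {s : ℕ} (F : Fin s → ℝ) :
    (∑ c : Fin (1 * s), F (finProdFinEquiv.symm c).2) = ∑ k : Fin s, F k := by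
  calc (∑ c : Fin (1 * s), F (finProdFinEquiv.symm c).2)
      = ∑ q : Fin 1 × Fin s, F q.2 :=
        Equiv.sum_comp finProdFinEquiv.symm (fun q : Fin 1 × Fin s => F q.2)
    _ = ∑ _t : Fin 1, ∑ k : Fin s, F k := Fintype.sum_prod_type _
    _ = ∑ k : Fin s, F k := by simp

/-- the first-layer matrix for the relu-appending NN block. -/
def reluA1 (s : ℕ) (a : Fin s) : Matrix (Fin (s + s + 1)) (Fin (1 * s)) ℝ :=
  Matrix.of fun r c =>
    Fin.lastCases (motive := fun _ => ℝ)
      (if (finProdFinEquiv.symm c).2 = a then 1 else 0)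
      (fun r' =>
        match finSumFinEquiv.symm r' with
        | .inl u => if (finProdFinEquiv.symm c).2 = u then 1 else 0
        | .inr u => if (finProdFinEquiv.symm c).2 = u then -1 else 0) r

/-- the second-layer matrix for the relu-appending NN block. -/
def reluA2 (s : ℕ) : Matrix (Fin (s + 1)) (Fin (s + s + 1)) ℝ :=
  Matrix.of fun i r =>
    Fin.lastCases (motive := fun _ => ℝ)
      (if i = Fin.last s then 1 else 0)
      (fun r' =>
        match finSumFinEquiv.symm r' with
        | .inl u => if i = u.castSucc then 1 else 0
        | .inr u => if i = u.castSucc then -1 else 0) r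

/-- append `relu` of an existing row. -/
lemma step_relu {s : ℕ} {w : Fin s → Row n p} (hw : GoodSt w) (a : Fin s) :
    GoodSt (Fin.snoc w (fun j X => relu (w a j X))) := by
  have hblock : IsDecoderBlock1 (fun Z : Mat s p =>
      colwise (oneLayerNN (reluA1 s a) 0 (reluA2 s) 0)
        (multiheadMaskedAttention (fun _ : Fin 1 => (0 : Matrix (Fin p) (Fin s) ℝ))
          (fun _ => (0 : Matrix (Fin p) (Fin s) ℝ)) (fun _ => (1 : Matrix (Fin s) (Fin s) ℝ))
          (fun _ => (1 : Matrix (Fin p) (Fin p) ℝ)) (fun _ => (1 : Matrix (Fin p) (Fin p) ℝ))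
          (fun _ => (0 : Matrix (Fin s) (Fin p) ℝ)) Z)) :=
    ⟨p, s, 1, s + s + 1, _, _, _, _, _, _, reluA1 s a, 0, reluA2 s, 0, rfl⟩
  refine hw.step _ hblock ?_
  intro Z X hZ i j
  simp only [colwise, Matrix.of_apply, oneLayerNN, Pi.add_apply, Pi.zero_apply, add_zero]
  have hcol : ∀ c : Fin (1 * s),
      multiheadMaskedAttention (fun _ : Fin 1 => (0 : Matrix (Fin p) (Fin s) ℝ))
        (fun _ => (0 : Matrix (Fin p) (Fin s) ℝ)) (fun _ => (1 : Matrix (Fin s) (Fin s) ℝ))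
        (fun _ => (1 : Matrix (Fin p) (Fin p) ℝ)) (fun _ => (1 : Matrix (Fin p) (Fin p) ℝ))
        (fun _ => (0 : Matrix (Fin s) (Fin p) ℝ)) Z c j = Z (finProdFinEquiv.symm c).2 j := by
    intro c
    simp only [multiheadMaskedAttention, Matrix.of_apply]
    rw [maskedAttention_maskId]
    simp
  -- hidden layer values
  have hhid : ∀ r : Fin (s + s + 1),
      (reluA1 s a).mulVec (fun c =>
        multiheadMaskedAttention (fun _ : Fin 1 => (0 : Matrix (Fin p) (Fin s) ℝ))
          (fun _ => (0 : Matrix (Fin p) (Fin s) ℝ)) (fun _ => (1 : Matrix (Fin s) (Fin s) ℝ))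
          (fun _ => (1 : Matrix (Fin p) (Fin p) ℝ)) (fun _ => (1 : Matrix (Fin p) (Fin p) ℝ))
          (fun _ => (0 : Matrix (Fin s) (Fin p) ℝ)) Z c j) r =
      Fin.lastCases (motive := fun _ => ℝ) (Z a j)
        (fun r' =>
          match finSumFinEquiv.symm r' with
          | .inl u => Z u j
          | .inr u => -Z u j) r := by
    intro r
    rw [Matrix.mulVec, dotProduct]
    have : ∀ c : Fin (1 * s), reluA1 s a r c *
        multiheadMaskedAttention (fun _ : Fin 1 => (0 : Matrix (Fin p) (Fin s) ℝ))
          (fun _ => (0 : Matrix (Fin p) (Fin s) ℝ)) (fun _ => (1 : Matrix (Fin s) (Fin s) ℝ))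
          (fun _ => (1 : Matrix (Fin p) (Fin p) ℝ)) (fun _ => (1 : Matrix (Fin p) (Fin p) ℝ))
          (fun _ => (0 : Matrix (Fin s) (Fin p) ℝ)) Z c j =
        reluA1 s a r c * Z (finProdFinEquiv.symm c).2 j := by
      intro c; rw [hcol]
    rw [Finset.sum_congr rfl fun c _ => this c]
    induction r using Fin.lastCases with
    | last =>
        simp only [reluA1, Matrix.of_apply, Fin.lastCases_last]
        rw [sum_finOneMul (fun k => (if k = a then (1:ℝ) else 0) * Z k j)]
        simp [ite_mul, Finset.sum_ite_eq']
    | cast r' =>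
        simp only [reluA1, Matrix.of_apply, Fin.lastCases_castSucc]
        rcases hr : finSumFinEquiv.symm r' with u | u
        · simp only [hr]
          rw [sum_finOneMul (fun k => (if k = u then (1:ℝ) else 0) * Z k j)]
          simp [ite_mul, Finset.sum_ite_eq']
        · simp only [hr]
          rw [sum_finOneMul (fun k => (if k = u then (-1:ℝ) else 0) * Z k j)]
          simp [ite_mul, Finset.sum_ite_eq']
  rw [Matrix.mulVec, dotProduct]
  have hterm : ∀ r : Fin (s + s + 1), reluA2 s i r * relu ((reluA1 s a).mulVec (fun c =>
        multiheadMaskedAttention (fun _ : Fin 1 => (0 : Matrix (Fin p) (Fin s) ℝ))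
          (fun _ => (0 : Matrix (Fin p) (Fin s) ℝ)) (fun _ => (1 : Matrix (Fin s) (Fin s) ℝ))
          (fun _ => (1 : Matrix (Fin p) (Fin p) ℝ)) (fun _ => (1 : Matrix (Fin p) (Fin p) ℝ))
          (fun _ => (0 : Matrix (Fin s) (Fin p) ℝ)) Z c j) r) =
      reluA2 s i r * relu (Fin.lastCases (motive := fun _ => ℝ) (Z a j)
        (fun r' =>
          match finSumFinEquiv.symm r' with
          | .inl u => Z u j
          | .inr u => -Z u j) r) := by
    intro r; rw [hhid r]
  rw [Finset.sum_congr rfl fun r _ => hterm r]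
  rw [Fin.sum_univ_castSucc]
  have hsplit : (∑ r' : Fin (s + s), reluA2 s i r'.castSucc *
      relu (Fin.lastCases (motive := fun _ => ℝ) (Z a j)
        (fun r'' =>
          match finSumFinEquiv.symm r'' with
          | .inl u => Z u j
          | .inr u => -Z u j) r'.castSucc)) =
      ∑ u : Fin s, ((if i = u.castSucc then (1:ℝ) else 0) * relu (Z u j) +
        (if i = u.castSucc then (-1:ℝ) else 0) * relu (-Z u j)) := by
    have hf : ∀ r' : Fin (s + s), reluA2 s i r'.castSucc *
        relu (Fin.lastCases (motive := fun _ => ℝ) (Z a j)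
          (fun r'' =>
            match finSumFinEquiv.symm r'' with
            | .inl u => Z u j
            | .inr u => -Z u j) r'.castSucc) =
        Sum.elim (fun u : Fin s => (if i = u.castSucc then (1:ℝ) else 0) * relu (Z u j))
          (fun u : Fin s => (if i = u.castSucc then (-1:ℝ) else 0) * relu (-Z u j))
          (finSumFinEquiv.symm r') := by
      intro r'
      simp only [reluA2, Matrix.of_apply, Fin.lastCases_castSucc]
      rcases hr : finSumFinEquiv.symm r' with u | u <;> simp [hr]
    rw [Finset.sum_congr rfl fun r' _ => hf r']
    rw [Equiv.sum_comp finSumFinEquiv.symm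
      (Sum.elim (fun u : Fin s => (if i = u.castSucc then (1:ℝ) else 0) * relu (Z u j))
        (fun u : Fin s => (if i = u.castSucc then (-1:ℝ) else 0) * relu (-Z u j)))]
    rw [Fintype.sum_sum_type]
    rw [← Finset.sum_add_distrib]
    simp only [Sum.elim_inl, Sum.elim_inr]
  rw [hsplit]
  simp only [reluA2, Matrix.of_apply, Fin.lastCases_last]
  induction i using Fin.lastCases with
  | last =>
      have : ∀ u : Fin s, ((if Fin.last s = u.castSucc then (1:ℝ) else 0) * relu (Z u j) +
          (if Fin.last s = u.castSucc then (-1:ℝ) else 0) * relu (-Z u j)) = 0 := by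
        intro u
        have : Fin.last s ≠ u.castSucc := (Fin.castSucc_lt_last u).ne'
        simp [this]
      rw [Finset.sum_congr rfl fun u _ => this u]
      simp [Fin.snoc_last, hZ a j]
  | cast c =>
      have hne : c.castSucc ≠ Fin.last s := (Fin.castSucc_lt_last c).ne
      have hsum : (∑ u : Fin s, ((if c.castSucc = u.castSucc then (1:ℝ) else 0) * relu (Z u j) +
          (if c.castSucc = u.castSucc then (-1:ℝ) else 0) * relu (-Z u j))) =
          relu (Z c j) - relu (-Z c j) := by
        have : ∀ u : Fin s, ((if c.castSucc = u.castSucc then (1:ℝ) else 0) * relu (Z u j) +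
            (if c.castSucc = u.castSucc then (-1:ℝ) else 0) * relu (-Z u j)) =
            if u = c then relu (Z u j) - relu (-Z u j) else 0 := by
          intro u
          rcases eq_or_ne u c with h | h
          · subst h; simp; ring
          · have : c.castSucc ≠ u.castSucc := by
              simp [Fin.castSucc_inj]; exact fun hh => h hh.symm
            simp [this, h]
        rw [Finset.sum_congr rfl fun u _ => this u]
        simp [Finset.sum_ite_eq']
      rw [hsum]
      simp [hne, relu_sub_relu_neg, Fin.snoc_castSucc, hZ c j]

end DecoderAux
namespace DecoderAux

variable {n p : ℕ}

/-- the prefix-sum-of-products row. -/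
def psumRow {s : ℕ} (w : Fin s → Row n p) (a b : Fin s) : Row n p :=
  fun j X => ∑ i' : Fin p, if i' ≤ j then w a i' X * w b i' X else 0

/-- the shift-by-one row. -/
def shiftRow {s : ℕ} (w : Fin s → Row n p) (a : Fin s) : Row n p :=
  fun j X => ∑ i' : Fin p, if (j : ℕ) = (i' : ℕ) + 1 then w a i' X else 0

def Kmat (s : ℕ) (b : Fin s) : Matrix (Fin p) (Fin s) ℝ :=
  Matrix.of fun _ c => if c = b then 1 else 0

def Vmat (s : ℕ) (a : Fin s) : Matrix (Fin (s + 1)) (Fin s) ℝ :=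
  Matrix.of fun r c => if r = Fin.last s ∧ c = a then 1 else 0

lemma Kmat_mul {s : ℕ} (b : Fin s) (Z : Mat s p) (k : Fin p) (i' : Fin p) :
    (Kmat s b * Z) k i' = Z b i' := by
  simp [Kmat, Matrix.mul_apply, ite_mul, Finset.sum_ite_eq']

lemma Vmat_mul_last {s : ℕ} (a : Fin s) (Z : Mat s p) (i' : Fin p) :
    (Vmat s a * Z) (Fin.last s) i' = Z a i' := by
  simp [Vmat, Matrix.mul_apply, ite_mul, Finset.sum_ite_eq']

/-- attention with a data-dependent key and `BQ = 1`, `AQ = 0`, `BK = 0`, `BV = 0`. -/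
lemma maskedAttention_data {s m : ℕ} (AK : Matrix (Fin p) (Fin s) ℝ)
    (AV : Matrix (Fin m) (Fin s) ℝ) (Z : Mat s p) (k : Fin m) (j : Fin p) :
    maskedAttention (0 : Matrix (Fin p) (Fin s) ℝ) AK AV (1 : Matrix (Fin p) (Fin p) ℝ) 0 0
      Z k j =
    ∑ i' : Fin p, (AV * Z) k i' * (if i' ≤ j then relu ((AK * Z) j i') else 0) := by
  rw [maskedAttention_apply]
  refine Finset.sum_congr rfl fun i' _ => ?_
  rw [score_shape AK 0]
  simp

/-- attention with a purely positional mask: `AQ = AK = 0`, `BQ = 1`. -/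
lemma maskedAttention_pos {s m : ℕ} (BK : Matrix (Fin p) (Fin p) ℝ)
    (AV : Matrix (Fin m) (Fin s) ℝ) (BV : Matrix (Fin m) (Fin p) ℝ)
    (Z : Mat s p) (k : Fin m) (j : Fin p) :
    maskedAttention (0 : Matrix (Fin p) (Fin s) ℝ) 0 AV (1 : Matrix (Fin p) (Fin p) ℝ) BK BV
      Z k j =
    ∑ i' : Fin p, (AV * Z + BV) k i' * (if i' ≤ j then relu (BK j i') else 0) := by
  rw [maskedAttention_apply]
  refine Finset.sum_congr rfl fun i' _ => ?_
  rw [score_shape 0 BK]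
  simp

lemma sum_pick {m : ℕ} (k₀ : Fin m) (c : Prop) [Decidable c] (F : Fin m → ℝ) :
    (∑ k, (if c ∧ k = k₀ then (1:ℝ) else 0) * F k) = if c then F k₀ else 0 := by
  by_cases hc : c <;> simp [hc, ite_mul, Finset.sum_ite_eq']

/-- append the prefix-sum of the product of two existing rows. -/
lemma step_psum {s : ℕ} {w : Fin s → Row n p} (hw : GoodSt w) (a b : Fin s) :
    GoodSt (Fin.snoc w (psumRow w a b)) := by
  refine hw.step (linAttn
    (fun (i : Fin (s + 1)) => ![fun k : Fin (s + 1) =>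
        Fin.lastCases (motive := fun _ => ℝ) 0 (fun c => if k = c.castSucc then 1 else 0) i,
      fun k : Fin (s + 1) => if i = Fin.last s ∧ k = Fin.last s then 1 else 0,
      fun k : Fin (s + 1) => if i = Fin.last s ∧ k = Fin.last s then 1 else 0])
    (fun _ => (0 : Matrix (Fin p) (Fin s) ℝ))
    ![0, Kmat s b, -Kmat s b]
    ![emb s, Vmat s a, -Vmat s a]
    (fun _ => (1 : Matrix (Fin p) (Fin p) ℝ))
    ![1, 0, 0]
    (fun _ => (0 : Matrix (Fin (s + 1)) (Fin p) ℝ)))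
    (isBlock_linAttn _ _ _ _ _ _ _) ?_
  intro Z X hZ i j
  rw [linAttn_apply, Fin.sum_univ_three]
  simp only [Matrix.cons_val_zero, Matrix.cons_val_one, Matrix.head_cons,
    Matrix.cons_val_two, Matrix.tail_cons]
  induction i using Fin.lastCases with
  | cast c =>
      have hlast : c.castSucc ≠ Fin.last s := (Fin.castSucc_lt_last c).ne
      simp only [Fin.lastCases_castSucc, hlast, false_and, if_false, zero_mul,
        Finset.sum_const_zero, add_zero]
      rw [Finset.sum_congr rfl fun k _ => by rw [ite_mul, one_mul, zero_mul]]
      rw [Finset.sum_ite_eq' Finset.univ c.castSucc]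
      simp only [Finset.mem_univ, if_true]
      rw [maskedAttention_maskId]
      simp only [Matrix.add_apply, Matrix.zero_apply, add_zero]
      rw [emb_mul_castSucc, Fin.snoc_castSucc]
      exact hZ c j
  | last =>
      simp only [Fin.lastCases_last, true_and, zero_mul, Finset.sum_const_zero, zero_add]
      have pick : ∀ F : Fin (s + 1) → ℝ,
          (∑ k : Fin (s + 1), (if k = Fin.last s then (1:ℝ) else 0) * F k) = F (Fin.last s) := by
        intro F
        rw [Finset.sum_congr rfl fun k _ => by rw [ite_mul, one_mul, zero_mul]]
        rw [Finset.sum_ite_eq' Finset.univ (Fin.last s)]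
        simp
      rw [pick, pick]
      rw [maskedAttention_data (Kmat s b) (Vmat s a),
        maskedAttention_data (-Kmat s b) (-Vmat s a)]
      simp only [Matrix.neg_mul, Matrix.neg_apply, Vmat_mul_last, Kmat_mul]
      rw [← Finset.sum_add_distrib]
      rw [Fin.snoc_last]
      unfold psumRow
      refine Finset.sum_congr rfl fun i' _ => ?_
      rw [← hZ a i', ← hZ b i']
      by_cases hij : i' ≤ j
      · simp only [hij, if_true]
        calc Z a i' * relu (Z b i') + -Z a i' * relu (-Z b i')
            = Z a i' * (relu (Z b i') - relu (-Z b i')) := by ring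
          _ = Z a i' * Z b i' := by rw [relu_sub_relu_neg]
      · simp [hij]

/-- append the backwards shift of an existing row. -/
lemma step_shift {s : ℕ} {w : Fin s → Row n p} (hw : GoodSt w) (a : Fin s) :
    GoodSt (Fin.snoc w (shiftRow w a)) := by
  refine hw.step (linAttn
    (fun (i : Fin (s + 1)) => ![fun k : Fin (s + 1) =>
        Fin.lastCases (motive := fun _ => ℝ) 0 (fun c => if k = c.castSucc then 1 else 0) i,
      fun k : Fin (s + 1) => if i = Fin.last s ∧ k = Fin.last s then 1 else 0])
    (fun _ => (0 : Matrix (Fin p) (Fin s) ℝ))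
    (fun _ => (0 : Matrix (Fin p) (Fin s) ℝ))
    ![emb s, Vmat s a]
    (fun _ => (1 : Matrix (Fin p) (Fin p) ℝ))
    ![1, Matrix.of fun (k : Fin p) (i' : Fin p) => if (k : ℕ) = (i' : ℕ) + 1 then 1 else 0]
    (fun _ => (0 : Matrix (Fin (s + 1)) (Fin p) ℝ)))
    (isBlock_linAttn _ _ _ _ _ _ _) ?_
  intro Z X hZ i j
  rw [linAttn_apply, Fin.sum_univ_two]
  simp only [Matrix.cons_val_zero, Matrix.cons_val_one, Matrix.head_cons]
  induction i using Fin.lastCases with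
  | cast c =>
      have hlast : c.castSucc ≠ Fin.last s := (Fin.castSucc_lt_last c).ne
      simp only [Fin.lastCases_castSucc, hlast, false_and, if_false, zero_mul,
        Finset.sum_const_zero, add_zero]
      rw [Finset.sum_congr rfl fun k _ => by rw [ite_mul, one_mul, zero_mul]]
      rw [Finset.sum_ite_eq' Finset.univ c.castSucc]
      simp only [Finset.mem_univ, if_true]
      rw [maskedAttention_maskId]
      simp only [Matrix.add_apply, Matrix.zero_apply, add_zero]
      rw [emb_mul_castSucc, Fin.snoc_castSucc]
      exact hZ c j
  | last =>
      simp only [Fin.lastCases_last, true_and, zero_mul, Finset.sum_const_zero, zero_add]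
      have pick : ∀ F : Fin (s + 1) → ℝ,
          (∑ k : Fin (s + 1), (if k = Fin.last s then (1:ℝ) else 0) * F k) = F (Fin.last s) := by
        intro F
        rw [Finset.sum_congr rfl fun k _ => by rw [ite_mul, one_mul, zero_mul]]
        rw [Finset.sum_ite_eq' Finset.univ (Fin.last s)]
        simp
      rw [pick]
      rw [maskedAttention_pos]
      rw [Fin.snoc_last]
      unfold shiftRow
      refine Finset.sum_congr rfl fun i' _ => ?_
      simp only [Matrix.add_apply, Matrix.zero_apply, add_zero, Matrix.of_apply,
        Vmat_mul_last]
      rw [← hZ a i']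
      by_cases hcond : (j : ℕ) = (i' : ℕ) + 1
      · have hle : i' ≤ j := by
          rw [Fin.le_def]; omega
        simp [hcond, hle]
      · simp [hcond]

/-- telescoping: term extraction from prefix sums. -/
lemma telescope (u : Fin p → ℝ) (j : Fin p) :
    (∑ i' : Fin p, if i' ≤ j then u i' else 0) -
      (∑ i' : Fin p, if (j : ℕ) = (i' : ℕ) + 1 then (∑ k : Fin p, if k ≤ i' then u k else 0)
        else 0) = u j := by
  rcases j with ⟨jv, hj⟩
  induction jv with
  | zero =>
      have h1 : (∑ i' : Fin p, if i' ≤ ⟨0, hj⟩ then u i' else 0) = u ⟨0, hj⟩ := by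
        have : ∀ i' : Fin p, (if i' ≤ ⟨0, hj⟩ then u i' else 0) =
            if i' = ⟨0, hj⟩ then u i' else 0 := by
          intro i'
          have hiff : i' ≤ (⟨0, hj⟩ : Fin p) ↔ i' = ⟨0, hj⟩ := by
            rw [Fin.le_def, Fin.ext_iff]; simp only [Fin.val_mk]; omega
          simp [hiff]
        rw [Finset.sum_congr rfl fun i' _ => this i']
        simp [Finset.sum_ite_eq']
      have h2 : (∑ i' : Fin p, if ((⟨0, hj⟩ : Fin p) : ℕ) = (i' : ℕ) + 1 then
          (∑ k : Fin p, if k ≤ i' then u k else 0) else 0) = 0 := by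
        refine Finset.sum_eq_zero fun i' _ => ?_
        simp
      rw [h1, h2, sub_zero]
  | succ jv' _ =>
      have hj' : jv' < p := by omega
      have h2 : (∑ i' : Fin p, if ((⟨jv' + 1, hj⟩ : Fin p) : ℕ) = (i' : ℕ) + 1 then
          (∑ k : Fin p, if k ≤ i' then u k else 0) else 0) =
          ∑ k : Fin p, if k ≤ ⟨jv', hj'⟩ then u k else 0 := by
        have : ∀ i' : Fin p, (if ((⟨jv' + 1, hj⟩ : Fin p) : ℕ) = (i' : ℕ) + 1 then
            (∑ k : Fin p, if k ≤ i' then u k else 0) else 0) =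
            if i' = ⟨jv', hj'⟩ then (∑ k : Fin p, if k ≤ i' then u k else 0) else 0 := by
          intro i'
          have hiff : ((⟨jv' + 1, hj⟩ : Fin p) : ℕ) = (i' : ℕ) + 1 ↔ i' = ⟨jv', hj'⟩ := by
            rw [Fin.ext_iff]; simp only [Fin.val_mk]; omega
          simp only [hiff]
        rw [Finset.sum_congr rfl fun i' _ => this i']
        simp [Finset.sum_ite_eq']
      rw [h2]
      have h1 : (∑ i' : Fin p, if i' ≤ ⟨jv' + 1, hj⟩ then u i' else 0) =
          u ⟨jv' + 1, hj⟩ + ∑ k : Fin p, if k ≤ ⟨jv', hj'⟩ then u k else 0 := by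
        have : ∀ i' : Fin p, (if i' ≤ ⟨jv' + 1, hj⟩ then u i' else 0) =
            (if i' = ⟨jv' + 1, hj⟩ then u i' else 0) +
            (if i' ≤ ⟨jv', hj'⟩ then u i' else 0) := by
          intro i'
          rcases eq_or_ne i' ⟨jv' + 1, hj⟩ with h | h
          · subst h
            simp [Fin.le_def]
          · have hne : (i' : ℕ) ≠ jv' + 1 := fun hh => h (Fin.ext hh)
            simp only [h, if_false, zero_add]
            congr 1
            simp [Fin.le_def]
            omega
        rw [Finset.sum_congr rfl fun i' _ => this i']
        rw [Finset.sum_add_distrib]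
        simp [Finset.sum_ite_eq']
      rw [h1]
      ring

end DecoderAux
namespace DecoderAux

variable {n p : ℕ}

def entryRow (a : Fin n) (b : Fin p) : Row n p := fun j X => if b ≤ j then X a b else 0

def onehotRow (j' : Fin p) : Row n p := fun j _ => if j' = j then 1 else 0

def baseRow : Fin (n * p + p) → Row n p := fun k =>
  match finSumFinEquiv.symm k with
  | .inl q => entryRow (finProdFinEquiv.symm q).1 (finProdFinEquiv.symm q).2
  | .inr j' => onehotRow j'

lemma sum_sum_pick {h m : ℕ} (t₀ : Fin h) (k₀ : Fin m) (F : Fin h → Fin m → ℝ) :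
    (∑ t, ∑ k, (if t = t₀ ∧ k = k₀ then (1:ℝ) else 0) * F t k) = F t₀ k₀ := by
  simp [ite_and, ite_mul, Finset.sum_ite_eq']

/-- column-copy mask. -/
def CB (b : Fin p) : Matrix (Fin p) (Fin p) ℝ := Matrix.of fun _ i' => if i' = b then 1 else 0

/-- one-hot output value matrix. -/
def OB (j' : Fin p) : Matrix (Fin (n + 1)) (Fin p) ℝ :=
  Matrix.of fun r i' => if r = Fin.last n ∧ i' = j' then 1 else 0

/-- the base state is achievable by a single block. -/
lemma goodSt_base : GoodSt (baseRow (n := n) (p := p)) := by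
  refine ⟨linAttn
    (fun (i : Fin (n * p + p)) (t : Fin (p + p)) (k : Fin (n + 1)) =>
      match finSumFinEquiv.symm i with
      | .inl q => if t = finSumFinEquiv (.inl (finProdFinEquiv.symm q).2) ∧
          k = (finProdFinEquiv.symm q).1.castSucc then 1 else 0
      | .inr j' => if t = finSumFinEquiv (.inr j') ∧ k = Fin.last n then 1 else 0)
    (fun _ => (0 : Matrix (Fin p) (Fin n) ℝ))
    (fun _ => (0 : Matrix (Fin p) (Fin n) ℝ))
    (fun t => match finSumFinEquiv.symm t with
      | .inl _ => emb n
      | .inr _ => 0)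
    (fun _ => (1 : Matrix (Fin p) (Fin p) ℝ))
    (fun t => match finSumFinEquiv.symm t with
      | .inl b => CB b
      | .inr _ => 1)
    (fun t => match finSumFinEquiv.symm t with
      | .inl _ => 0
      | .inr j' => OB j'), ⟨1, .block _ (isBlock_linAttn _ _ _ _ _ _ _)⟩, ?_⟩
  intro X i j
  rw [linAttn_apply]
  rcases hi : finSumFinEquiv.symm i with q | j'
  · simp only [hi]
    rw [sum_sum_pick]
    simp only [Equiv.symm_apply_apply]
    rw [maskedAttention_pos (CB (finProdFinEquiv.symm q).2) (emb n) 0]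
    unfold baseRow
    rw [hi]
    unfold entryRow
    set a := (finProdFinEquiv.symm q).1
    set b := (finProdFinEquiv.symm q).2
    have hterm : ∀ i' : Fin p, ((emb n * X + 0 : Matrix (Fin (n + 1)) (Fin p) ℝ)) a.castSucc i' *
        (if i' ≤ j then relu (CB b j i') else 0) =
        if i' = b then (if b ≤ j then X a b else 0) else 0 := by
      intro i'
      rw [Matrix.add_apply, Matrix.zero_apply, add_zero, emb_mul_castSucc]
      rcases eq_or_ne i' b with h | h
      · subst h
        simp [CB]
      · simp [CB, h]
    rw [Finset.sum_congr rfl fun i' _ => hterm i']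
    rw [Finset.sum_ite_eq' Finset.univ b]
    simp only [Finset.mem_univ, if_true]
    rfl
  · simp only [hi]
    rw [sum_sum_pick]
    simp only [Equiv.symm_apply_apply]
    rw [maskedAttention_pos 1 0 (OB j')]
    unfold baseRow
    rw [hi]
    unfold onehotRow
    have hterm : ∀ i' : Fin p, (((0 : Matrix (Fin (n+1)) (Fin n) ℝ) * X + OB j' :
        Matrix (Fin (n + 1)) (Fin p) ℝ)) (Fin.last n) i' * (if i' ≤ j then relu ((1 : Matrix (Fin p) (Fin p) ℝ) j i') else 0) =
        if i' = j then (if j' = j then (1:ℝ) else 0) else 0 := by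
      intro i'
      rw [Matrix.add_apply, Matrix.zero_mul, Matrix.zero_apply, zero_add]
      rcases eq_or_ne i' j with h | h
      · subst h
        simp [OB, Matrix.one_apply, and_comm]
        rcases eq_or_ne j' i' with h2 | h2
        · simp [h2]
        · simp [h2, Ne.symm h2]
      · have : ¬ (j = i') := fun hh => h hh.symm
        simp [Matrix.one_apply, this, h]
    rw [Finset.sum_congr rfl fun i' _ => hterm i']
    rw [Finset.sum_ite_eq' Finset.univ j]
    simp

def Avail {s : ℕ} (w : Fin s → Row n p) : Prop :=
  (∀ (a : Fin n) (b : Fin p), ∃ k, ∀ j X, w k j X = entryRow a b j X) ∧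
    (∀ j' : Fin p, ∃ k, ∀ j X, w k j X = onehotRow j' j X)

lemma avail_base : Avail (baseRow (n := n) (p := p)) := by
  constructor
  · intro a b
    refine ⟨finSumFinEquiv (.inl (finProdFinEquiv (a, b))), fun j X => ?_⟩
    unfold baseRow
    simp [Equiv.symm_apply_apply]
  · intro j'
    refine ⟨finSumFinEquiv (.inr j'), fun j X => ?_⟩
    unfold baseRow
    simp [Equiv.symm_apply_apply]

lemma Avail.snoc {s : ℕ} {w : Fin s → Row n p} (hw : Avail w) (g : Row n p) :
    Avail (Fin.snoc w g) := by
  constructor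
  · intro a b
    obtain ⟨k, hk⟩ := hw.1 a b
    exact ⟨k.castSucc, fun j X => by rw [Fin.snoc_castSucc]; exact hk j X⟩
  · intro j'
    obtain ⟨k, hk⟩ := hw.2 j'
    exact ⟨k.castSucc, fun j X => by rw [Fin.snoc_castSucc]; exact hk j X⟩

end DecoderAux
namespace DecoderAux

variable {n p : ℕ}

lemma pick1 {s : ℕ} (k₀ : Fin s) (F : Fin s → ℝ) :
    (∑ k, (if k = k₀ then (1:ℝ) else 0) * F k) = F k₀ := by
  simp [ite_mul, Finset.sum_ite_eq']

lemma pickc {s : ℕ} (k₀ : Fin s) (c : ℝ) (F : Fin s → ℝ) :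
    (∑ k, (if k = k₀ then c else 0) * F k) = c * F k₀ := by
  have : ∀ k, (if k = k₀ then c else 0) * F k = if k = k₀ then c * F k else 0 := by
    intro k; rcases eq_or_ne k k₀ with h | h <;> simp [h]
  rw [Finset.sum_congr rfl fun k _ => this k, Finset.sum_ite_eq' Finset.univ k₀]
  simp

lemma pick2 {s : ℕ} (k₁ k₂ : Fin s) (c₁ c₂ : ℝ) (F : Fin s → ℝ) :
    (∑ k, ((if k = k₁ then c₁ else 0) + (if k = k₂ then c₂ else 0)) * F k) =
      c₁ * F k₁ + c₂ * F k₂ := by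
  simp only [add_mul]
  rw [Finset.sum_add_distrib, pickc, pickc]

/-- rows obtainable from inputs by autoregressive decoders. -/
inductive Ach : Row n p → Prop
  | entry (a : Fin n) (b : Fin p) : Ach (entryRow a b)
  | onehot (j' : Fin p) : Ach (onehotRow j')
  | zero : Ach (fun _ _ => 0)
  | add {g h : Row n p} : Ach g → Ach h → Ach (fun j X => g j X + h j X)
  | smul (c : ℝ) {g : Row n p} : Ach g → Ach (fun j X => c * g j X)
  | relu' {g : Row n p} : Ach g → Ach (fun j X => relu (g j X))
  | mul {g h : Row n p} : Ach g → Ach h → Ach (fun j X => g j X * h j X)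

/-- append an existing row (by coordinate) -/
lemma snoc_of_coord {s : ℕ} {w : Fin s → Row n p} (hG : GoodSt w) (g : Row n p)
    (k₀ : Fin s) (hk : ∀ j X, g j X = w k₀ j X) : GoodSt (Fin.snoc w g) := by
  refine GoodSt.proj hG _ (fun i => Fin.lastCases k₀ (fun c => c) i) ?_
  intro i j X
  induction i using Fin.lastCases with
  | last => simp only [Fin.snoc_last, Fin.lastCases_last]; exact hk j X
  | cast c => simp only [Fin.snoc_castSucc, Fin.lastCases_castSucc]

lemma Ach.append {g : Row n p} (hg : Ach g) :
    ∀ {s : ℕ} (w : Fin s → Row n p), Avail w → GoodSt w → GoodSt (Fin.snoc w g) := by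
  induction hg with
  | entry a b =>
      intro s w hA hG
      obtain ⟨k, hk⟩ := hA.1 a b
      exact snoc_of_coord hG _ k (fun j X => (hk j X).symm)
  | onehot j' =>
      intro s w hA hG
      obtain ⟨k, hk⟩ := hA.2 j'
      exact snoc_of_coord hG _ k (fun j X => (hk j X).symm)
  | zero =>
      intro s w hA hG
      refine step_lin hG
        (fun i => Fin.lastCases (motive := fun _ => Fin s → ℝ) (fun _ => 0)
          (fun c k => if k = c then 1 else 0) i) _ ?_
      intro i j X
      induction i using Fin.lastCases with
      | last => simp only [Fin.snoc_last, Fin.lastCases_last]; simp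
      | cast c =>
          simp only [Fin.snoc_castSucc, Fin.lastCases_castSucc]
          rw [pick1]
  | add hg1 hh1 ihg ihh =>
      intro s w hA hG
      rename_i g₁ h₁
      have hW1 := ihg w hA hG
      have hW2 := ihh _ (hA.snoc g₁) hW1
      refine step_lin hW2
        (fun i => Fin.lastCases (motive := fun _ => Fin (s + 1 + 1) → ℝ)
          (fun k => (if k = (Fin.last s).castSucc then (1:ℝ) else 0) +
            (if k = Fin.last (s + 1) then (1:ℝ) else 0))
          (fun c k => if k = c.castSucc.castSucc then 1 else 0) i) _ ?_
      intro i j X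
      induction i using Fin.lastCases with
      | last =>
          simp only [Fin.snoc_last, Fin.lastCases_last]
          rw [pick2]
          simp only [Fin.snoc_castSucc, Fin.snoc_last, one_mul]
      | cast c =>
          simp only [Fin.snoc_castSucc, Fin.lastCases_castSucc]
          rw [pick1]
          simp only [Fin.snoc_castSucc]
  | smul c hg1 ihg =>
      intro s w hA hG
      rename_i g₁
      have hW1 := ihg w hA hG
      refine step_lin hW1
        (fun i => Fin.lastCases (motive := fun _ => Fin (s + 1) → ℝ)
          (fun k => if k = Fin.last s then c else 0)
          (fun c' k => if k = c'.castSucc then 1 else 0) i) _ ?_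
      intro i j X
      induction i using Fin.lastCases with
      | last =>
          simp only [Fin.snoc_last, Fin.lastCases_last]
          rw [pickc]
          simp only [Fin.snoc_last]
      | cast c' =>
          simp only [Fin.snoc_castSucc, Fin.lastCases_castSucc]
          rw [pick1]
          simp only [Fin.snoc_castSucc]
  | relu' hg1 ihg =>
      intro s w hA hG
      rename_i g₁
      have hW1 := ihg w hA hG
      have hW2 := step_relu hW1 (Fin.last s)
      have hW2' : GoodSt (Fin.snoc (Fin.snoc w g₁) (fun j X => relu (g₁ j X))) := by
        refine hW2.congr ?_
        intro i j X
        induction i using Fin.lastCases with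
        | last => simp only [Fin.snoc_last]
        | cast c => simp only [Fin.snoc_castSucc]
      refine GoodSt.proj hW2' _
        (fun i => Fin.lastCases (Fin.last (s + 1)) (fun c => c.castSucc.castSucc) i) ?_
      intro i j X
      induction i using Fin.lastCases with
      | last => simp only [Fin.snoc_last, Fin.lastCases_last]
      | cast c => simp only [Fin.snoc_castSucc, Fin.lastCases_castSucc]
  | mul hg1 hh1 ihg ihh =>
      intro s w hA hG
      rename_i g₁ h₁
      have hW1 := ihg w hA hG
      have hW2 := ihh _ (hA.snoc g₁) hW1
      have hW3 := step_psum hW2 ((Fin.last s).castSucc) (Fin.last (s + 1))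
      have hW4 := step_shift hW3 (Fin.last (s + 1 + 1))
      refine step_lin hW4
        (fun i => Fin.lastCases (motive := fun _ => Fin (s + 1 + 1 + 1 + 1) → ℝ)
          (fun k => (if k = (Fin.last (s + 1 + 1)).castSucc then (1:ℝ) else 0) +
            (if k = Fin.last (s + 1 + 1 + 1) then (-1:ℝ) else 0))
          (fun c k => if k = c.castSucc.castSucc.castSucc.castSucc then 1 else 0) i) _ ?_
      intro i j X
      induction i using Fin.lastCases with
      | cast c =>
          simp only [Fin.snoc_castSucc, Fin.lastCases_castSucc]
          rw [pick1]
          simp only [Fin.snoc_castSucc]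
      | last =>
          simp only [Fin.snoc_last, Fin.lastCases_last]
          rw [pick2]
          simp only [Fin.snoc_castSucc, Fin.snoc_last]
          unfold shiftRow psumRow
          simp only [Fin.snoc_castSucc, Fin.snoc_last]
          have := telescope (fun i' => g₁ i' X * h₁ i' X) j
          calc g₁ j X * h₁ j X
              = (∑ i' : Fin p, if i' ≤ j then g₁ i' X * h₁ i' X else 0) -
                (∑ i' : Fin p, if (j : ℕ) = (i' : ℕ) + 1 then
                  (∑ k : Fin p, if k ≤ i' then g₁ k X * h₁ k X else 0) else 0) := this.symm
            _ = _ := by ring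
end DecoderAux
namespace DecoderAux

variable {n p : ℕ}

lemma Ach.congr {g g' : Row n p} (hg : Ach g) (h : ∀ j X, g j X = g' j X) : Ach g' := by
  have : g = g' := funext fun j => funext fun X => h j X
  exact this ▸ hg

lemma Ach.finsum {ι : Type} [DecidableEq ι] (s : Finset ι) (F : ι → Row n p)
    (hF : ∀ k ∈ s, Ach (F k)) : Ach (fun j X => ∑ k ∈ s, F k j X) := by
  induction s using Finset.induction_on with
  | empty => exact Ach.zero.congr (by simp)
  | insert a t hx ih =>
      exact (Ach.add (hF a (Finset.mem_insert_self a t))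
        (ih fun k hk => hF k (Finset.mem_insert_of_mem hk))).congr
        (by intro j X; rw [Finset.sum_insert hx])

lemma Ach.const (r : ℝ) : Ach (fun _ _ => r : Row n p) := by
  refine (Ach.finsum Finset.univ (fun j' => fun j X => r * onehotRow j' j X)
    (fun k _ => Ach.smul r (Ach.onehot k))).congr ?_
  intro j X
  simp [onehotRow, mul_ite, mul_one, mul_zero, Finset.sum_ite_eq']

lemma relu_max (a b : ℝ) : relu (a + (-1) * b) + b = max a b := by
  rcases le_total a b with h | h
  · rw [max_eq_right h, relu, max_eq_right (by linarith)]; ring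
  · rw [max_eq_left h, relu, max_eq_left (by linarith)]; ring

lemma Ach.max2 {g h : Row n p} (hg : Ach g) (hh : Ach h) :
    Ach (fun j X => max (g j X) (h j X)) :=
  (Ach.add (Ach.relu' (Ach.add hg (Ach.smul (-1) hh))) hh).congr
    (fun j X => relu_max (g j X) (h j X))

lemma Ach.min2 {g h : Row n p} (hg : Ach g) (hh : Ach h) :
    Ach (fun j X => min (g j X) (h j X)) := by
  refine (Ach.smul (-1) (Ach.max2 (Ach.smul (-1) hg) (Ach.smul (-1) hh))).congr ?_
  intro j X
  rcases le_total (g j X) (h j X) with hle | hle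
  · rw [min_eq_left hle, max_eq_left (by linarith)]; ring
  · rw [min_eq_right hle, max_eq_right (by linarith)]; ring

lemma Ach.sup' {ι : Type} (s : Finset ι) (hs : s.Nonempty) (F : ι → Row n p)
    (hF : ∀ k ∈ s, Ach (F k)) : Ach (fun j X => s.sup' hs (fun k => F k j X)) := by
  induction hs using Finset.Nonempty.cons_induction with
  | singleton a => exact (hF a (Finset.mem_singleton_self a)).congr (by simp)
  | cons a t ha hts ih =>
      refine (Ach.max2 (hF a (Finset.mem_cons_self a t))
        (ih fun k hk => hF k (Finset.mem_cons_of_mem hk))).congr ?_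
      intro j X
      rw [Finset.sup'_cons]

lemma Ach.inf' {ι : Type} (s : Finset ι) (hs : s.Nonempty) (F : ι → Row n p)
    (hF : ∀ k ∈ s, Ach (F k)) : Ach (fun j X => s.inf' hs (fun k => F k j X)) := by
  induction hs using Finset.Nonempty.cons_induction with
  | singleton a => exact (hF a (Finset.mem_singleton_self a)).congr (by simp)
  | cons a t ha hts ih =>
      refine (Ach.min2 (hF a (Finset.mem_cons_self a t))
        (ih fun k hk => hF k (Finset.mem_cons_of_mem hk))).congr ?_
      intro j X
      rw [Finset.inf'_cons]

lemma Ach.isup {m : ℕ} (F : Fin (m + 1) → Row n p) (hF : ∀ k, Ach (F k)) :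
    Ach (fun j X => ⨆ k, F k j X) :=
  (Ach.sup' Finset.univ Finset.univ_nonempty F (fun k _ => hF k)).congr
    (fun j X => Finset.sup'_univ_eq_ciSup _)

lemma Ach.iinf {m : ℕ} (F : Fin (m + 1) → Row n p) (hF : ∀ k, Ach (F k)) :
    Ach (fun j X => ⨅ k, F k j X) :=
  (Ach.inf' Finset.univ Finset.univ_nonempty F (fun k _ => hF k)).congr
    (fun j X => Finset.inf'_univ_eq_ciInf _)

lemma Ach.poly (q : MvPolynomial (Fin n × Fin p) ℝ) :
    Ach (fun j X => MvPolynomial.eval (fun v => entryRow v.1 v.2 j X) q) := by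
  induction q using MvPolynomial.induction_on with
  | C r => exact (Ach.const r).congr (by simp)
  | add q1 q2 ih1 ih2 => exact (Ach.add ih1 ih2).congr (by simp)
  | mul_X q1 v ih =>
      exact (Ach.mul ih (Ach.entry v.1 v.2)).congr (by simp)

lemma Avail.appendLeft {s e : ℕ} {w : Fin s → Row n p} (hw : Avail w)
    (v : Fin e → Row n p) : Avail (Fin.append w v) := by
  constructor
  · intro a b
    obtain ⟨k, hk⟩ := hw.1 a b
    exact ⟨Fin.castAdd e k, fun j X => by rw [Fin.append_left]; exact hk j X⟩
  · intro j'
    obtain ⟨k, hk⟩ := hw.2 j'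
    exact ⟨Fin.castAdd e k, fun j X => by rw [Fin.append_left]; exact hk j X⟩

lemma appendMany : ∀ {e : ℕ} (v : Fin e → Row n p), (∀ k, Ach (v k)) →
    ∀ {s : ℕ} (w : Fin s → Row n p), Avail w → GoodSt w → GoodSt (Fin.append w v) := by
  intro e
  induction e with
  | zero =>
      intro v hv s w hA hG
      have hveq : v = Fin.elim0 := funext fun k => k.elim0
      rw [hveq, Fin.append_elim0]
      exact GoodSt.proj hG _ (fun i => Fin.cast (Nat.add_zero s) i) (fun i j X => rfl)
  | succ e ih =>
      intro v hv s w hA hG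
      have hv' : v = Fin.snoc (Fin.init v) (v (Fin.last e)) := (Fin.snoc_init_self v).symm
      rw [hv', Fin.append_snoc]
      exact (hv (Fin.last e)).append _ (hA.appendLeft (Fin.init v))
        (ih (Fin.init v) (fun k => hv _) w hA hG)

end DecoderAux
/-- Every autoregressive max-definable function `f : ℝ^{n×p} → ℝ^{m×p}` is a ReLU decoder: for
some finite `t` there are multihead ReLU masked attention modules `β_1, …, β_t` and one-layer
ReLU feed-forward neural networks `φ_1, …, φ_t` (applied columnwise) with
`f = φ_t ∘ β_t ∘ ⋯ ∘ φ_1 ∘ β_1`. -/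
theorem autoregressive_maxDefinable_is_decoder (n p m : ℕ)
    (f : Matrix (Fin n) (Fin p) ℝ → Matrix (Fin m) (Fin p) ℝ)
    (hf : IsMatrixMaxDefinable f) (haf : Autoregressive f) :
    ∃ t : ℕ, IsDecoder1 t f := by
  classical
  open DecoderAux in
  -- the target rows
  set R : Fin m → Row n p := fun i j X => f X i j with hR
  -- each target row is achievable
  have hAchR : ∀ i, Ach (R i) := by
    intro i
    choose mm qq ξ hξ using (fun j' : Fin p => hf i j')
    set E : Fin p → Row n p := fun j' => fun j X =>
      ⨆ a : Fin (mm j' + 1), ⨅ b : Fin (qq j' + 1),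
        MvPolynomial.eval (fun v : Fin n × Fin p => entryRow v.1 v.2 j X) (ξ j' a b) with hE
    have hAchE : ∀ j', Ach (E j') := by
      intro j'
      exact Ach.isup _ (fun a => Ach.iinf _ (fun b => Ach.poly (ξ j' a b)))
    refine (Ach.finsum Finset.univ
      (fun j' => fun j X => onehotRow j' j X * E j' j X)
      (fun j' _ => Ach.mul (Ach.onehot j') (hAchE j'))).congr ?_
    intro j X
    have hsum : (∑ j' : Fin p, onehotRow j' j X * E j' j X) = E j j X := by
      unfold onehotRow
      simp [ite_mul, one_mul, zero_mul, Finset.sum_ite_eq]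
    rw [hsum]
    -- identify `E j j X` with `f X i j`
    set x : Fin n × Fin p → ℝ := fun v => if v.2 ≤ j then X v.1 v.2 else 0 with hx
    have h1 := hξ j x
    have h2 : f X i j = f (Matrix.of fun a b => x (a, b)) i j := by
      refine haf X _ j ?_ i
      intro j'' hj'' i'
      simp only [Matrix.of_apply, hx]
      rw [if_pos hj'']
    have hEx : E j j X = ⨆ a : Fin (mm j + 1), ⨅ b : Fin (qq j + 1),
        MvPolynomial.eval x (ξ j a b) := rfl
    rw [hEx, ← h1]
    show f (Matrix.of fun a b => x (a, b)) i j = R i j X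
    rw [← h2]
  -- realize all target rows in a decoder state
  have hGood : GoodSt (Fin.append (baseRow (n := n) (p := p)) R) :=
    appendMany R hAchR baseRow avail_base goodSt_base
  have hGoodR : GoodSt R := by
    refine GoodSt.proj hGood R (fun i => Fin.natAdd (n * p + p) i) ?_
    intro i j X
    rw [Fin.append_right]
  obtain ⟨G, ⟨t, ht⟩, hreal⟩ := hGoodR
  have hfG : f = G := by
    funext X
    ext i j
    exact (hreal X i j).symm
  exact ⟨t, hfG ▸ ht⟩
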